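/- Let k ≥ 1, let f = x² − y^{k+1} ∈ R (a representative of the A_k-singularity), and let 0 ≤ α ≤ 1 be rational. Then γ_α^{ea}(f) = (k + α)². -/

import Mathlib

open MvPowerSeries

noncomputable section

/-- `R = ℂ⟦x,y⟧`, the ring of formal power series in two variables over `ℂ`. -/
abbrev R2 : Type := MvPowerSeries (Fin 2) ℂ

/-- The maximal ideal `m = ⟨x, y⟩` of `ℂ⟦x,y⟧`. -/
def mm : Ideal R2 := Ideal.span {X 0, X 1}

/-- `dim_ℂ R/I` as an extended natural number. -/
def edim (I : Ideal R2) : ℕ∞ := Cardinal.toENat (Module.rank ℂ (R2 ⧸ I))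

/-- `dim_ℂ R/I` as a natural number (junk value `0` when infinite). -/
def fdim (I : Ideal R2) : ℕ := (edim I).toNat

/-- The formal partial derivative of a power series with respect to the `i`-th variable. -/
def pd (i : Fin 2) (f : R2) : R2 :=
  fun d => ((d i : ℂ) + 1) * coeff (d + Finsupp.single i 1) f

/-- The Tjurina ideal `I^{ea}(f) = ⟨∂f/∂x, ∂f/∂y, f⟩`. -/
def Tjurina (f : R2) : Ideal R2 := Ideal.span {pd 0 f, pd 1 f, f}

/-- The intersection multiplicity `i(f,g) = dim_ℂ R/⟨f,g⟩ ∈ ℕ ∪ {∞}`. -/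
def interNum (f g : R2) : ℕ∞ := edim (Ideal.span {f, g})

/-- `λ_α(f;I,g) = (α·i(f,g) + (1−α)·dim_ℂ(R/I))² / (i(f,g) − dim_ℂ(R/I))`. -/
def lam (α : ℚ) (f : R2) (I : Ideal R2) (g : R2) : ℝ :=
  ((α : ℝ) * ((interNum f g).toNat : ℝ) + (1 - (α : ℝ)) * (fdim I : ℝ)) ^ 2 /
    (((interNum f g).toNat : ℝ) - (fdim I : ℝ))

/-- `γ_α(f;I) = max({(1+α)²·dim_ℂ(R/I)} ∪ {λ_α(f;I,g) : g ∈ I, i(f,g) ≤ 2·dim_ℂ(R/I)})`. -/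
def gam (α : ℚ) (f : R2) (I : Ideal R2) : ℝ :=
  sSup ({(1 + (α : ℝ)) ^ 2 * (fdim I : ℝ)} ∪
    {x : ℝ | ∃ g ∈ I, interNum f g ≤ 2 * edim I ∧ x = lam α f I g})

/-- A complete intersection ideal: zero-dimensional and generated by two elements. -/
def IsCI (I : Ideal R2) : Prop := edim I < ⊤ ∧ ∃ a b : R2, I = Ideal.span {a, b}

/-- `γ_α^{ea}(f) = max({0} ∪ {γ_α(f;I) : I a complete intersection ideal,
`I^{ea}(f) ⊆ I ⊆ m`})`. -/
def gamEA (α : ℚ) (f : R2) : ℝ :=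
  sSup ({0} ∪ {x : ℝ | ∃ I : Ideal R2, IsCI I ∧ Tjurina f ≤ I ∧ I ≤ mm ∧ x = gam α f I})

/-! ### Auxiliary lemmas -/

lemma decomp (d : Fin 2 →₀ ℕ) : d = Finsupp.single 0 (d 0) + Finsupp.single 1 (d 1) := by
  ext i; fin_cases i <;> simp

/-- The coefficient-extraction linear map used to compute `dim ℂ⟦x,y⟧/⟨x, yⁿ⟩`. -/
def phi (n : ℕ) : R2 →ₗ[ℂ] (Fin n → ℂ) where
  toFun f := fun j => f (Finsupp.single 1 (j : ℕ))
  map_add' := by intros; rfl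
  map_smul' := by intros; rfl

lemma phi_surj (n : ℕ) : Function.Surjective (phi n) := by
  intro v
  refine ⟨fun d => if h : d 0 = 0 ∧ d 1 < n then v ⟨d 1, h.2⟩ else 0, ?_⟩
  funext j
  show (if h : _ ∧ _ then _ else _) = v j
  rw [dif_pos]
  · simp
  · simp [j.2]

lemma ker_phi (n : ℕ) :
    LinearMap.ker (phi n) = (Ideal.span {X 0, X 1 ^ n} : Ideal R2).restrictScalars ℂ := by
  have hX0 : (X 0 : R2) = monomial (Finsupp.single 0 1) 1 := rfl
  have hX1 : (X 1 : R2) ^ n = monomial (Finsupp.single 1 n) 1 := X_pow_eq 1 n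
  ext f
  simp only [LinearMap.mem_ker, Submodule.restrictScalars_mem]
  constructor
  · intro hf
    have hf' : ∀ j : Fin n, f (Finsupp.single 1 (j : ℕ)) = 0 := fun j => congrFun hf j
    rw [Ideal.mem_span_pair]
    refine ⟨(@id R2 fun d => coeff (d + Finsupp.single 0 1) f),
      (@id R2 fun d => if d 0 = 0 then coeff (d + Finsupp.single 1 n) f else 0), ?_⟩
    have hc : ∀ (g : (Fin 2 →₀ ℕ) → ℂ) e, coeff e (@id R2 g) = g e := fun _ _ => rfl
    apply MvPowerSeries.ext
    intro d
    rw [map_add, mul_comm, mul_comm _ ((X 1:R2)^n), hX0, hX1, coeff_monomial_mul,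
      coeff_monomial_mul]
    simp only [one_mul, hc, Finsupp.single_le_iff]
    rcases Nat.eq_zero_or_pos (d 0) with h0 | h0
    · rw [if_neg (by omega), zero_add]
      rcases lt_or_ge (d 1) n with h1 | h1
      · rw [if_neg (by omega)]
        have h2 : f d = 0 := by
          have h3 := hf' ⟨d 1, h1⟩
          rw [decomp d, h0, Finsupp.single_zero, zero_add]
          exact h3
        exact h2.symm
      · rw [if_pos h1, if_pos (by simp [Finsupp.tsub_apply, h0]),
          tsub_add_cancel_of_le (by rwa [Finsupp.single_le_iff])]
    · rw [if_pos (show (1:ℕ) ≤ d 0 by omega), tsub_add_cancel_of_le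
        (by rwa [Finsupp.single_le_iff])]
      rcases lt_or_ge (d 1) n with h1 | h1
      · rw [if_neg (by omega), add_zero]
      · rw [if_pos h1, if_neg (by simp [Finsupp.tsub_apply, Finsupp.single_apply]; omega),
          add_zero]
  · intro hf
    rw [Ideal.mem_span_pair] at hf
    obtain ⟨a, b, rfl⟩ := hf
    funext j
    show coeff (Finsupp.single 1 (j:ℕ)) _ = 0
    have hA : ¬ (Finsupp.single 0 1 ≤ Finsupp.single (1 : Fin 2) (j:ℕ)) := by
      rw [Finsupp.single_le_iff]; simp [Finsupp.single_apply]
    have hB : ¬ (Finsupp.single 1 n ≤ Finsupp.single (1 : Fin 2) (j:ℕ)) := by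
      rw [Finsupp.single_le_iff]; simp [Finsupp.single_apply]
    rw [map_add, hX0, hX1, coeff_mul_monomial, coeff_mul_monomial, if_neg hA, if_neg hB, add_zero]

lemma edim_span (n : ℕ) : edim (Ideal.span {X 0, X 1 ^ n}) = n := by
  set I : Ideal R2 := Ideal.span {X 0, X 1 ^ n} with hI
  have e : (R2 ⧸ I) ≃ₗ[ℂ] (Fin n → ℂ) :=
    (((Submodule.Quotient.restrictScalarsEquiv ℂ I).symm.trans
      (Submodule.quotEquivOfEq _ _ (ker_phi n)).symm).trans
      ((phi n).quotKerEquivOfSurjective (phi_surj n)))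
  rw [edim, e.rank_eq, rank_fin_fun, Cardinal.toENat_nat]

lemma edim_mono {I J : Ideal R2} (h : J ≤ I) : edim I ≤ edim J := by
  have hm : (J.restrictScalars ℂ) ≤ Submodule.comap (LinearMap.id : R2 →ₗ[ℂ] R2)
      (I.restrictScalars ℂ) := fun x hx => h hx
  have hs : Function.Surjective
      (Submodule.mapQ (J.restrictScalars ℂ) (I.restrictScalars ℂ) LinearMap.id hm) := by
    intro x
    obtain ⟨y, rfl⟩ := Submodule.Quotient.mk_surjective _ x
    exact ⟨Submodule.Quotient.mk y, by rw [Submodule.mapQ_apply]; rfl⟩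
  have hr : Module.rank ℂ (R2 ⧸ (I.restrictScalars ℂ)) ≤
      Module.rank ℂ (R2 ⧸ (J.restrictScalars ℂ)) :=
    (Submodule.mapQ _ _ LinearMap.id hm).rank_le_of_surjective hs
  have eI := (Submodule.Quotient.restrictScalarsEquiv ℂ I).rank_eq
  have eJ := (Submodule.Quotient.restrictScalarsEquiv ℂ J).rank_eq
  rw [edim, edim, ← eI, ← eJ]
  exact Cardinal.toENat.monotone' hr

lemma pd0_eq (k : ℕ) : pd 0 (X 0 ^ 2 - X 1 ^ (k + 1)) = C (σ := Fin 2) (R := ℂ) 2 * X 0 := by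
  have hR : C (σ := Fin 2) (R := ℂ) 2 * X 0 = monomial (Finsupp.single 0 1) 2 := by
    rw [show (X 0 : R2) = monomial (Finsupp.single 0 1) 1 from rfl,
      show (C (σ := Fin 2) (R := ℂ) 2 : R2) = monomial 0 2 from rfl, monomial_mul_monomial, zero_add,
      mul_one]
  apply MvPowerSeries.ext
  intro d
  rw [hR, coeff_monomial]
  show ((d 0 : ℂ) + 1) * coeff (d + Finsupp.single 0 1) (X 0 ^ 2 - X 1 ^ (k+1)) = _
  rw [map_sub, X_pow_eq, X_pow_eq, coeff_monomial, coeff_monomial]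
  have h2 : ¬ (d + Finsupp.single 0 1 = Finsupp.single 1 (k+1)) := by
    intro h
    have := DFunLike.congr_fun h 0
    simp at this
  rw [if_neg h2]
  by_cases hd : d = Finsupp.single 0 1
  · have : d + Finsupp.single 0 1 = Finsupp.single 0 2 := by
      rw [hd, ← Finsupp.single_add]
    rw [if_pos this, if_pos hd, hd]
    simp
    try norm_num
  · have : ¬ (d + Finsupp.single 0 1 = Finsupp.single 0 2) := by
      intro h
      apply hd
      apply add_right_cancel (b := Finsupp.single (0 : Fin 2) 1)
      rw [h, ← Finsupp.single_add]
    rw [if_neg this, if_neg hd]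
    ring

lemma pd1_eq (k : ℕ) : pd 1 (X 0 ^ 2 - X 1 ^ (k + 1)) = C (σ := Fin 2) (R := ℂ) (-(k+1)) * X 1 ^ k := by
  have hR : C (σ := Fin 2) (R := ℂ) (-(k+1)) * X 1 ^ k = monomial (Finsupp.single 1 k) (-(k+1) : ℂ) := by
    rw [X_pow_eq, show (C (σ := Fin 2) (R := ℂ) (-(k+1)) : R2) = monomial 0 (-(k+1) : ℂ) from rfl,
      monomial_mul_monomial, zero_add, mul_one]
  apply MvPowerSeries.ext
  intro d
  rw [hR, coeff_monomial]
  show ((d 1 : ℂ) + 1) * coeff (d + Finsupp.single 1 1) (X 0 ^ 2 - X 1 ^ (k+1)) = _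
  rw [map_sub, X_pow_eq, X_pow_eq, coeff_monomial, coeff_monomial]
  have h2 : ¬ (d + Finsupp.single 1 1 = Finsupp.single 0 2) := by
    intro h
    have := DFunLike.congr_fun h 1
    simp at this
  rw [if_neg h2]
  by_cases hd : d = Finsupp.single 1 k
  · have : d + Finsupp.single 1 1 = Finsupp.single 1 (k+1) := by
      rw [hd, ← Finsupp.single_add]
    rw [if_pos this, if_pos hd, hd]
    simp
    try ring
  · have : ¬ (d + Finsupp.single 1 1 = Finsupp.single 1 (k+1)) := by
      intro h
      apply hd
      apply add_right_cancel (b := Finsupp.single (1 : Fin 2) 1)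
      rw [h, ← Finsupp.single_add]
    rw [if_neg this, if_neg hd]
    ring
lemma realineq (a d i kk : ℝ) (h0 : 0 ≤ a) (h1 : a ≤ 1) (hk : 1 ≤ kk) (hd : d ≤ kk)
    (ht1 : d + 1 ≤ i) (ht2 : i ≤ 2*d) : (a*i + (1-a)*d)^2 ≤ (kk+a)^2 * (i - d) := by
  nlinarith [mul_nonneg (sub_nonneg.2 ht2) (sub_nonneg.2 ht1),
    mul_nonneg (mul_nonneg (sub_nonneg.2 ht2) (sub_nonneg.2 ht1)) (sq_nonneg a),
    mul_nonneg (sub_nonneg.2 hd) (sub_nonneg.2 ht1),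
    mul_nonneg (sub_nonneg.2 hd) (sub_nonneg.2 ht2),
    mul_nonneg (mul_nonneg (sub_nonneg.2 hd) (sub_nonneg.2 ht1)) h0,
    mul_nonneg (mul_nonneg (sub_nonneg.2 hd) (sub_nonneg.2 ht2)) h0,
    mul_nonneg (mul_nonneg (sub_nonneg.2 hk) (sub_nonneg.2 ht1)) (sub_nonneg.2 hd),
    mul_nonneg (mul_nonneg h0 (sub_nonneg.2 h1)) (sub_nonneg.2 ht1),
    sq_nonneg (i - d - 1), sq_nonneg (i - 2*d), mul_nonneg h0 (sub_nonneg.2 h1)]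

lemma X0_mem (k : ℕ) : (X 0 : R2) ∈ (Ideal.span {X 0, X 1 ^ k} : Ideal R2) :=
  Ideal.subset_span (Set.mem_insert _ _)

lemma X1k_mem (k : ℕ) : (X 1 : R2) ^ k ∈ (Ideal.span {X 0, X 1 ^ k} : Ideal R2) :=
  Ideal.subset_span (Set.mem_insert_of_mem _ rfl)

lemma f_mem (k : ℕ) : (X 0 ^ 2 - X 1 ^ (k+1) : R2) ∈ (Ideal.span {X 0, X 1 ^ k} : Ideal R2) := by
  rw [show (X 0 ^ 2 - X 1 ^ (k+1) : R2) = X 0 * X 0 - X 1 * X 1^k by ring]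
  exact Ideal.sub_mem _ (Ideal.mul_mem_left _ _ (X0_mem k)) (Ideal.mul_mem_left _ _ (X1k_mem k))

lemma Tjurina_le (k : ℕ) :
    Tjurina (X 0 ^ 2 - X 1 ^ (k+1)) ≤ (Ideal.span {X 0, X 1 ^ k} : Ideal R2) := by
  rw [Tjurina, Ideal.span_le]
  rintro p hp
  simp only [Set.mem_insert_iff, Set.mem_singleton_iff] at hp
  rcases hp with rfl | rfl | rfl
  · rw [pd0_eq]; exact Ideal.mul_mem_left _ _ (X0_mem k)
  · rw [pd1_eq]; exact Ideal.mul_mem_left _ _ (X1k_mem k)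
  · exact f_mem k

lemma le_Tjurina (k : ℕ) :
    (Ideal.span {X 0, X 1 ^ k} : Ideal R2) ≤ Tjurina (X 0 ^ 2 - X 1 ^ (k+1)) := by
  have hp0 : pd 0 (X 0 ^ 2 - X 1 ^ (k+1)) ∈ Tjurina (X 0 ^ 2 - X 1 ^ (k+1)) :=
    Ideal.subset_span (Set.mem_insert _ _)
  have hp1 : pd 1 (X 0 ^ 2 - X 1 ^ (k+1)) ∈ Tjurina (X 0 ^ 2 - X 1 ^ (k+1)) :=
    Ideal.subset_span (Set.mem_insert_of_mem _ (Set.mem_insert _ _))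
  rw [Ideal.span_le]
  rintro p hp
  simp only [Set.mem_insert_iff, Set.mem_singleton_iff] at hp
  rcases hp with rfl | rfl
  · have hmem := Ideal.mul_mem_left _ (C (σ := Fin 2) (R := ℂ) 2⁻¹) hp0
    rwa [pd0_eq, ← mul_assoc, ← map_mul, (by norm_num : ((2:ℂ)⁻¹ * 2 : ℂ) = 1), map_one,
      one_mul] at hmem
  · have hk1' : ((k+1 : ℕ) : ℂ) ≠ 0 := Nat.cast_ne_zero.2 (Nat.succ_ne_zero k)
    have hk1 : (-((k:ℂ)+1)) ≠ 0 := by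
      intro h
      apply hk1'
      push_cast
      linear_combination -h
    have hmem := Ideal.mul_mem_left _ (C (σ := Fin 2) (R := ℂ) (-((k:ℂ)+1))⁻¹) hp1
    rwa [pd1_eq, ← mul_assoc, ← map_mul, inv_mul_cancel₀ hk1, map_one, one_mul] at hmem

lemma span_fX0 (k : ℕ) : (Ideal.span {X 0 ^ 2 - X 1 ^ (k+1), X 0} : Ideal R2)
    = Ideal.span {X 0, X 1 ^ (k+1)} := by
  apply le_antisymm
  · rw [Ideal.span_le]
    rintro p hp
    simp only [Set.mem_insert_iff, Set.mem_singleton_iff] at hp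
    rcases hp with rfl | rfl
    · exact Ideal.sub_mem _
        (by rw [sq]; exact Ideal.mul_mem_left _ _ (Ideal.subset_span (Set.mem_insert _ _)))
        (Ideal.subset_span (Set.mem_insert_of_mem _ rfl))
    · exact Ideal.subset_span (Set.mem_insert _ _)
  · rw [Ideal.span_le]
    rintro p hp
    simp only [Set.mem_insert_iff, Set.mem_singleton_iff] at hp
    rcases hp with rfl | rfl
    · exact Ideal.subset_span (Set.mem_insert_of_mem _ rfl)
    · have hmem : (X 0 * X 0 - (X 0 ^ 2 - X 1 ^ (k+1)) : R2) ∈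
          (Ideal.span {X 0 ^ 2 - X 1 ^ (k+1), X 0} : Ideal R2) :=
        Ideal.sub_mem _
          (Ideal.mul_mem_left _ _ (Ideal.subset_span (Set.mem_insert_of_mem _ rfl)))
          (Ideal.subset_span (Set.mem_insert _ _))
      rwa [show (X 0 * X 0 - (X 0 ^ 2 - X 1 ^ (k+1)) : R2) = X 1 ^ (k+1) by ring] at hmem

lemma I0_le_mm (k : ℕ) (hk : 1 ≤ k) : (Ideal.span {X 0, X 1 ^ k} : Ideal R2) ≤ mm := by
  rw [Ideal.span_le]
  rintro p hp
  simp only [Set.mem_insert_iff, Set.mem_singleton_iff] at hp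
  rcases hp with rfl | rfl
  · exact Ideal.subset_span (Set.mem_insert _ _)
  · obtain ⟨m, rfl⟩ : ∃ m, k = m+1 := ⟨k-1, by omega⟩
    rw [pow_succ]
    exact Ideal.mul_mem_left _ _ (Ideal.subset_span (Set.mem_insert_of_mem _ rfl))

lemma realineq2 (a d kk : ℝ) (h0 : 0 ≤ a) (h1 : a ≤ 1) (hk : 1 ≤ kk) (hd : d ≤ kk)
    (hdn : 0 ≤ d) : (1+a)^2 * d ≤ (kk+a)^2 := by
  nlinarith [mul_nonneg (sub_nonneg.2 hk) (by nlinarith : (0:ℝ) ≤ kk - a^2),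
    mul_nonneg (sq_nonneg (1+a)) (sub_nonneg.2 hd)]

/-- For `k ≥ 1`, `f = x² − y^{k+1}` (an `A_k`-singularity) and rational
`0 ≤ α ≤ 1`, one has `γ_α^{ea}(f) = (k + α)²`. -/
theorem stmt4 (k : ℕ) (hk : 1 ≤ k) (α : ℚ) (hα0 : 0 ≤ α) (hα1 : α ≤ 1) :
    gamEA α (X 0 ^ 2 - X 1 ^ (k + 1)) = ((k : ℝ) + α) ^ 2 := by
  set f : R2 := X 0 ^ 2 - X 1 ^ (k + 1) with hf
  set I₀ : Ideal R2 := Ideal.span {X 0, X 1 ^ k} with hI₀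
  set B : ℝ := ((k : ℝ) + α) ^ 2 with hB
  have hα0' : (0:ℝ) ≤ (α:ℝ) := by exact_mod_cast hα0
  have hα1' : (α:ℝ) ≤ 1 := by exact_mod_cast hα1
  have hk' : (1:ℝ) ≤ (k:ℝ) := by exact_mod_cast hk
  have hB0 : (0:ℝ) ≤ B := sq_nonneg _
  have hedim0 : edim I₀ = (k : ℕ∞) := edim_span k
  have hfdim0 : fdim I₀ = k := by rw [fdim, hedim0, ENat.toNat_coe]
  have hinter : interNum f (X 0) = ((k+1 : ℕ) : ℕ∞) := by
    rw [interNum, hf, span_fX0 k, edim_span (k+1)]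
  have hiN : (interNum f (X 0)).toNat = k+1 := by rw [hinter, ENat.toNat_coe]
  -- value of lambda at the witness g = X 0
  have lamx : lam α f I₀ (X 0) = B := by
    rw [lam, hiN, hfdim0, hB]
    push_cast
    rw [show ((k:ℝ)+1-(k:ℝ)) = 1 by ring, div_one]
    ring
  -- the general lambda bound
  have lam_bd : ∀ (I : Ideal R2) (g : R2), edim I < ⊤ → edim I ≤ (k:ℕ∞) →
      interNum f g ≤ 2 * edim I → lam α f I g ≤ B := by
    intro I g htop hle hig
    set d := fdim I with hd
    have hdI : edim I = (d : ℕ∞) := by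
      rw [hd, fdim, ENat.coe_toNat htop.ne]
    have hdk : d ≤ k := by
      rw [hdI] at hle
      exact_mod_cast hle
    have h2d : interNum f g ≤ ((2*d : ℕ) : ℕ∞) := by
      rw [hdI] at hig
      calc interNum f g ≤ 2 * (d : ℕ∞) := hig
        _ = ((2*d : ℕ) : ℕ∞) := by push_cast; ring
    have hfin : interNum f g ≠ ⊤ := by
      intro h
      rw [h] at h2d
      exact (ENat.coe_lt_top (2*d)).not_ge h2d
    have hi2d : (interNum f g).toNat ≤ 2*d := by
      have := ENat.toNat_le_toNat h2d (ENat.coe_lt_top (2*d)).ne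
      rwa [ENat.toNat_coe] at this
    set i := (interNum f g).toNat with hi
    rw [lam, ← hi, ← hd]
    rcases le_or_gt i d with hcase | hcase
    · have hden : ((i:ℝ) - (d:ℝ)) ≤ 0 := by
        have : (i:ℝ) ≤ (d:ℝ) := by exact_mod_cast hcase
        linarith
      have hquot : ((α:ℝ) * i + (1 - (α:ℝ)) * d) ^ 2 / ((i:ℝ) - (d:ℝ)) ≤ 0 :=
        div_nonpos_iff.mpr (Or.inl ⟨sq_nonneg _, hden⟩)
      exact hquot.trans hB0
    · have hcase' : (d:ℝ) + 1 ≤ (i:ℝ) := by exact_mod_cast hcase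
      have hden : (0:ℝ) < (i:ℝ) - (d:ℝ) := by linarith
      rw [div_le_iff₀ hden]
      exact realineq (α:ℝ) (d:ℝ) (i:ℝ) (k:ℝ) hα0' hα1' hk'
        (by exact_mod_cast hdk) hcase' (by exact_mod_cast hi2d)
  -- the bound on gamma for each admissible ideal
  have gam_bd : ∀ I : Ideal R2, edim I < ⊤ → edim I ≤ (k:ℕ∞) → gam α f I ≤ B := by
    intro I htop hle
    apply Real.sSup_le _ hB0
    intro x hx
    rcases hx with hx | hx
    · rw [Set.mem_singleton_iff] at hx
      subst hx
      have hdk : (fdim I : ℝ) ≤ (k:ℝ) := by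
        have : fdim I ≤ k := by
          have := ENat.toNat_le_toNat hle (ENat.coe_lt_top k).ne
          rwa [ENat.toNat_coe] at this
        exact_mod_cast this
      have hdnn : (0:ℝ) ≤ (fdim I : ℝ) := Nat.cast_nonneg _
      rw [hB]
      exact realineq2 (α:ℝ) (fdim I : ℝ) (k:ℝ) hα0' hα1' hk' hdk hdnn
    · obtain ⟨g, hg, hig, rfl⟩ := hx
      exact lam_bd I g htop hle hig
  -- gamma at the Tjurina ideal
  have hub0 : ∀ x ∈ ({(1 + (α : ℝ)) ^ 2 * (fdim I₀ : ℝ)} ∪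
      {x : ℝ | ∃ g ∈ I₀, interNum f g ≤ 2 * edim I₀ ∧ x = lam α f I₀ g}), x ≤ B := by
    intro y hy
    rcases hy with hy | hy
    · rw [Set.mem_singleton_iff] at hy
      subst hy
      have hdk : (fdim I₀ : ℝ) ≤ (k:ℝ) := by rw [hfdim0]
      exact realineq2 (α:ℝ) (fdim I₀ : ℝ) (k:ℝ) hα0' hα1' hk' hdk (Nat.cast_nonneg _)
    · obtain ⟨g, hg, hig, rfl⟩ := hy
      exact lam_bd I₀ g (by rw [hedim0]; exact ENat.coe_lt_top k) (le_of_eq hedim0) hig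
  have hmem0 : B ∈ ({(1 + (α : ℝ)) ^ 2 * (fdim I₀ : ℝ)} ∪
      {x : ℝ | ∃ g ∈ I₀, interNum f g ≤ 2 * edim I₀ ∧ x = lam α f I₀ g}) := by
    refine Set.mem_union_right _ ⟨X 0, X0_mem k, ?_, lamx.symm⟩
    rw [hinter, hedim0]
    calc ((k+1 : ℕ) : ℕ∞) ≤ ((2*k : ℕ) : ℕ∞) := by exact_mod_cast (by omega : k+1 ≤ 2*k)
      _ = 2 * (k : ℕ∞) := by push_cast; ring
  have hgam0 : gam α f I₀ = B := by
    rw [gam]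
    exact le_antisymm (Real.sSup_le hub0 hB0) (le_csSup ⟨B, hub0⟩ hmem0)
  -- conclusion
  rw [gamEA]
  apply le_antisymm
  · apply Real.sSup_le _ hB0
    intro x hx
    rcases hx with hx | hx
    · rw [Set.mem_singleton_iff] at hx
      rw [hx]
      exact hB0
    · obtain ⟨I, hCI, hTI, hIm, rfl⟩ := hx
      have hle : edim I ≤ (k:ℕ∞) := hedim0 ▸ edim_mono ((le_Tjurina k).trans hTI)
      exact gam_bd I hCI.1 hle
  · have hub : ∀ x ∈ ({(0:ℝ)} ∪ {x : ℝ | ∃ I : Ideal R2, IsCI I ∧ Tjurina f ≤ I ∧ I ≤ mm ∧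
        x = gam α f I}), x ≤ B := by
      intro x hx
      rcases hx with hx | hx
      · rw [Set.mem_singleton_iff] at hx
        rw [hx]
        exact hB0
      · obtain ⟨I, hCI, hTI, hIm, rfl⟩ := hx
        have hle : edim I ≤ (k:ℕ∞) := hedim0 ▸ edim_mono ((le_Tjurina k).trans hTI)
        exact gam_bd I hCI.1 hle
    refine le_csSup ⟨B, hub⟩ (Set.mem_union_right _ ?_)
    exact ⟨I₀, ⟨by rw [hedim0]; exact ENat.coe_lt_top k, X 0, X 1 ^ k, hI₀⟩,
      Tjurina_le k, I0_le_mm k hk, hgam0.symm⟩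

end
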